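/- arXiv:1701.07938 — 4 statements merged into one kernel-verified Lean document; each statement's English description precedes it below -/
import Mathlib

section
/- Let ℓ ≥ 3. There exists a proper algebraic subset Σ ⊂ (ℝ²)^ℓ such that for every p = (p₁,…,p_ℓ) ∈ (ℝ²)^ℓ \ Σ and every singular point q ∈ ℝ² of the mapping F_p, one has q ≠ p_i for all 1 ≤ i ≤ ℓ; equivalently, all the values c_i = F_i(q) are strictly positive, so each level set {x : F_i(x) = c_i} is an ellipse (for i = 1) or a circle (for 2 ≤ i ≤ ℓ) rather than a single point. -/
/-- The (rescaled) Jacobian matrix of the generalized distance-squared mapping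
`F_p(x) = (a(x₁-p₁₁)² + b(x₂-p₁₂)², |x-p₂|², …, |x-p_ℓ|²)` at the point `q`. -/
noncomputable def Jmat (ℓ : ℕ) (a b : ℝ) (p : Fin ℓ → ℝ × ℝ) (q : ℝ × ℝ) :
    Matrix (Fin ℓ) (Fin 2) ℝ :=
  fun i => if i.val = 0 then ![a * (q.1 - (p i).1), b * (q.2 - (p i).2)]
    else ![q.1 - (p i).1, q.2 - (p i).2]

/-- `q` is a singular point of `F_p`: the Jacobian matrix has rank < 2. -/
def IsSingular (ℓ : ℕ) (a b : ℝ) (p : Fin ℓ → ℝ × ℝ) (q : ℝ × ℝ) : Prop :=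
  (Jmat ℓ a b p q).rank < 2

/-- The `2ℓ` real coordinates of a central point `p ∈ (ℝ²)^ℓ`. -/
def coords (ℓ : ℕ) (p : Fin ℓ → ℝ × ℝ) : Fin ℓ × Fin 2 → ℝ :=
  fun ij => if ij.2.val = 0 then (p ij.1).1 else (p ij.1).2

lemma rank_le_of_submatrix_rows {l : ℕ} (A : Matrix (Fin l) (Fin 2) ℝ) (f : Fin 2 → Fin l) :
    (A.submatrix f id).rank ≤ A.rank := by
  rw [Matrix.rank_eq_finrank_span_row, Matrix.rank_eq_finrank_span_row]
  apply Submodule.finrank_mono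
  apply Submodule.span_mono
  rintro x ⟨i, rfl⟩
  exact ⟨f i, rfl⟩

lemma two_le_rank_of_det {l : ℕ} (A : Matrix (Fin l) (Fin 2) ℝ) (f : Fin 2 → Fin l)
    (h : (A.submatrix f id).det ≠ 0) : 2 ≤ A.rank := by
  have hu : IsUnit (A.submatrix f id) := by
    rw [Matrix.isUnit_iff_isUnit_det]; exact h.isUnit
  have hr := Matrix.rank_of_isUnit (A.submatrix f id) hu
  calc (2 : ℕ) = (A.submatrix f id).rank := by simp [hr]
    _ ≤ A.rank := rank_le_of_submatrix_rows A f

/-- There is a proper algebraic subset Σ of (ℝ²)^ℓ such that for p outside Σ,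
every singular point q of F_p differs from all the centers p_i. -/
theorem stmt3 (ℓ : ℕ) (hℓ : 3 ≤ ℓ) (a b : ℝ) (ha : 0 < a) (hab : a < b) :
    ∃ Sig : Set (Fin ℓ → ℝ × ℝ),
      (∃ S : Finset (MvPolynomial (Fin ℓ × Fin 2) ℝ),
        Sig = {p | ∀ f ∈ S, MvPolynomial.eval (coords ℓ p) f = 0}) ∧
      Sig ≠ Set.univ ∧
      ∀ p ∉ Sig, ∀ q : ℝ × ℝ, IsSingular ℓ a b p q → ∀ i : Fin ℓ, q ≠ p i := by
  classical
  have h0 : 0 < ℓ := by omega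
  have h1 : 1 < ℓ := by omega
  have h2 : 2 < ℓ := by omega
  have hb : 0 < b := lt_trans ha hab
  set i0 : Fin ℓ := ⟨0, h0⟩ with hi0
  set i1 : Fin ℓ := ⟨1, h1⟩ with hi1
  set i2 : Fin ℓ := ⟨2, h2⟩ with hi2
  set jf : Fin ℓ → Fin ℓ := fun i => if i.val = 0 then i1 else i0 with hjf
  set kf : Fin ℓ → Fin ℓ := fun i => if i.val ≤ 1 then i2 else i1 with hkf
  -- real-valued row entries at q = p i
  set rx : Fin ℓ → Fin ℓ → (Fin ℓ → ℝ × ℝ) → ℝ := fun r i p =>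
    if r.val = 0 then a * ((p i).1 - (p r).1) else (p i).1 - (p r).1 with hrx
  set ry : Fin ℓ → Fin ℓ → (Fin ℓ → ℝ × ℝ) → ℝ := fun r i p =>
    if r.val = 0 then b * ((p i).2 - (p r).2) else (p i).2 - (p r).2 with hry
  set gval : Fin ℓ → (Fin ℓ → ℝ × ℝ) → ℝ := fun i p =>
    rx (jf i) i p * ry (kf i) i p - ry (jf i) i p * rx (kf i) i p with hgval
  -- polynomial versions
  set Rx : Fin ℓ → Fin ℓ → MvPolynomial (Fin ℓ × Fin 2) ℝ := fun r i =>
    if r.val = 0 then MvPolynomial.C a * (MvPolynomial.X (i, 0) - MvPolynomial.X (r, 0))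
    else MvPolynomial.X (i, 0) - MvPolynomial.X (r, 0) with hRx
  set Ry : Fin ℓ → Fin ℓ → MvPolynomial (Fin ℓ × Fin 2) ℝ := fun r i =>
    if r.val = 0 then MvPolynomial.C b * (MvPolynomial.X (i, 1) - MvPolynomial.X (r, 1))
    else MvPolynomial.X (i, 1) - MvPolynomial.X (r, 1) with hRy
  set g : Fin ℓ → MvPolynomial (Fin ℓ × Fin 2) ℝ := fun i =>
    Rx (jf i) i * Ry (kf i) i - Ry (jf i) i * Rx (kf i) i with hg
  set G : MvPolynomial (Fin ℓ × Fin 2) ℝ := ∏ i, g i with hG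
  have evalg : ∀ (p : Fin ℓ → ℝ × ℝ) (i : Fin ℓ),
      MvPolynomial.eval (coords ℓ p) (g i) = gval i p := by
    intro p i
    have ex : ∀ r i' : Fin ℓ, MvPolynomial.eval (coords ℓ p) (Rx r i') = rx r i' p := by
      intro r i'
      by_cases h : r.val = 0 <;> simp [hRx, hrx, h, coords]
    have ey : ∀ r i' : Fin ℓ, MvPolynomial.eval (coords ℓ p) (Ry r i') = ry r i' p := by
      intro r i'
      by_cases h : r.val = 0 <;> simp [hRy, hry, h, coords]
    simp [hg, hgval, ex, ey]
  have evalG : ∀ (p : Fin ℓ → ℝ × ℝ),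
      MvPolynomial.eval (coords ℓ p) G = ∏ i, gval i p := by
    intro p
    simp [hG, evalg]
  refine ⟨{p | MvPolynomial.eval (coords ℓ p) G = 0}, ⟨{G}, by ext p; simp⟩, ?_, ?_⟩
  · -- properness: witness configuration
    set P : Fin ℓ → ℝ × ℝ := fun m =>
      if m.val = 0 then (0, 0) else if m.val = 1 then (1, 0) else (0, (m.val : ℝ)) with hP
    have hPval : ∀ i, gval i P ≠ 0 := by
      intro i
      have hcase : i.val = 0 ∨ i.val = 1 ∨ 2 ≤ i.val := by omega
      rcases hcase with h | h | h
      · -- rows 1, 2 : (-1, 0) and (0, -2)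
        have : gval i P = 2 := by
          simp [hgval, hjf, hkf, hrx, hry, h, hP, hi0, hi1, hi2]
          try norm_num
          try ring
        rw [this]; norm_num
      · -- rows 0, 2 : (a, 0) and (1, -2)
        have : gval i P = -(a * 2) := by
          simp [hgval, hjf, hkf, hrx, hry, h, hP, hi0, hi1, hi2]
        rw [this]; intro hc; nlinarith
      · -- rows 0, 1 : (0, b·i) and (-1, i)
        have h0' : ¬ i.val = 0 := by omega
        have h1' : ¬ i.val ≤ 1 := by omega
        have h1'' : ¬ i.val = 1 := by omega
        have : gval i P = b * (i.val : ℝ) := by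
          simp [hgval, hjf, hkf, hrx, hry, h0', h1', h1'', hP, hi0, hi1, hi2]
          try ring
        rw [this]
        have : (0:ℝ) < (i.val : ℝ) := by exact_mod_cast by omega
        positivity
    intro hU
    have hmem : P ∈ {p | MvPolynomial.eval (coords ℓ p) G = 0} := hU ▸ Set.mem_univ P
    rw [Set.mem_setOf_eq, evalG] at hmem
    exact (Finset.prod_ne_zero_iff.mpr fun i _ => hPval i) hmem
  · -- main implication
    intro p hp q hsing i hq
    rw [Set.mem_setOf_eq, evalG] at hp
    have hgi : gval i p ≠ 0 := by
      intro h
      exact hp (Finset.prod_eq_zero (Finset.mem_univ i) h)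
    -- the 2×2 submatrix with rows jf i, kf i has determinant gval i p
    set A := Jmat ℓ a b p q with hA
    have hJ0 : ∀ r : Fin ℓ, A r 0 = rx r i p := by
      intro r
      by_cases h : r.val = 0 <;> simp [hA, Jmat, hrx, h, hq]
    have hJ1 : ∀ r : Fin ℓ, A r 1 = ry r i p := by
      intro r
      by_cases h : r.val = 0 <;> simp [hA, Jmat, hry, h, hq]
    have hdet : (A.submatrix ![jf i, kf i] id).det = gval i p := by
      rw [Matrix.det_fin_two]
      simp only [Matrix.submatrix_apply, id_eq, Matrix.cons_val_zero, Matrix.cons_val_one,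
        Matrix.head_cons, hJ0, hJ1, hgval]
    have := two_le_rank_of_det A ![jf i, kf i] (by rw [hdet]; exact hgi)
    exact absurd hsing (by simpa [IsSingular, ← hA] using not_lt.mpr this)
end

section
/- Let ℓ > 3 and let p = (p₁,…,p_ℓ) ∈ (ℝ²)^ℓ. If the singular set of F_p : ℝ² → ℝ^ℓ is nonempty, then the 2ℓ coordinates of p satisfy a nontrivial polynomial relation; more precisely, the set of p ∈ (ℝ²)^ℓ for which F_p has a singular point is contained in a proper algebraic subset of (ℝ²)^ℓ (equivalently, for almost every p with respect to Lebesgue measure, F_p is an immersion). -/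
/-- If two vectors `(x1,y1)`, `(x2,y2)` are both orthogonal to a nonzero vector
`(c,d)`, then their determinant vanishes. -/
lemma minor_zero {c d x1 y1 x2 y2 : ℝ} (hv : c ≠ 0 ∨ d ≠ 0)
    (h1 : x1 * c + y1 * d = 0) (h2 : x2 * c + y2 * d = 0) :
    x1 * y2 - y1 * x2 = 0 := by
  rcases hv with hc | hd
  · have h : (x1 * y2 - y1 * x2) * c = 0 := by linear_combination y2 * h1 - y1 * h2
    exact (mul_eq_zero.mp h).resolve_right hc
  · have h : (x1 * y2 - y1 * x2) * d = 0 := by linear_combination -x2 * h1 + x1 * h2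
    exact (mul_eq_zero.mp h).resolve_right hd

/-- An `ℓ × 2` real matrix of rank `< 2` has a nonzero kernel vector. -/
lemma exists_kernel_vec {ℓ : ℕ} {A : Matrix (Fin ℓ) (Fin 2) ℝ} (h : A.rank < 2) :
    ∃ v : Fin 2 → ℝ, v ≠ 0 ∧ A.mulVec v = 0 := by
  by_contra hcon
  push_neg at hcon
  have hinj : Function.Injective A.mulVecLin := by
    rw [← LinearMap.ker_eq_bot, LinearMap.ker_eq_bot']
    intro v hv
    by_contra hne
    exact hcon v hne hv
  have : A.rank = 2 := by
    rw [Matrix.rank, LinearMap.finrank_range_of_inj hinj]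
    simp
  omega

/-- for ℓ > 3, the set of central points p for which F_p has a singular point
is contained in a proper algebraic subset of (ℝ²)^ℓ. -/
theorem stmt7 (ℓ : ℕ) (hℓ : 3 < ℓ) (a b : ℝ) (ha : 0 < a) (hab : a < b) :
    ∃ Sig : Set (Fin ℓ → ℝ × ℝ),
      (∃ S : Finset (MvPolynomial (Fin ℓ × Fin 2) ℝ),
        Sig = {p | ∀ f ∈ S, MvPolynomial.eval (coords ℓ p) f = 0}) ∧
      Sig ≠ Set.univ ∧
      {p | ∃ q : ℝ × ℝ, IsSingular ℓ a b p q} ⊆ Sig := by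
  set i1 : Fin ℓ := ⟨1, by omega⟩
  set i2 : Fin ℓ := ⟨2, by omega⟩
  set i3 : Fin ℓ := ⟨3, by omega⟩
  set X := fun v : Fin ℓ × Fin 2 => (MvPolynomial.X v : MvPolynomial (Fin ℓ × Fin 2) ℝ)
  set f : MvPolynomial (Fin ℓ × Fin 2) ℝ :=
    (X (i2, 0) - X (i1, 0)) * (X (i3, 1) - X (i1, 1))
      - (X (i3, 0) - X (i1, 0)) * (X (i2, 1) - X (i1, 1)) with hf
  have heval : ∀ p : Fin ℓ → ℝ × ℝ, MvPolynomial.eval (coords ℓ p) f =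
      ((p i2).1 - (p i1).1) * ((p i3).2 - (p i1).2)
        - ((p i3).1 - (p i1).1) * ((p i2).2 - (p i1).2) := by
    intro p
    simp [hf, X, coords]
  refine ⟨{p | MvPolynomial.eval (coords ℓ p) f = 0}, ⟨{f}, by ext p; simp⟩, ?_, ?_⟩
  · intro hU
    set p0 : Fin ℓ → ℝ × ℝ :=
      fun i => if i.val = 2 then (1, 0) else if i.val = 3 then (0, 1) else (0, 0) with hp0
    have h0 : p0 ∈ ({p | MvPolynomial.eval (coords ℓ p) f = 0} : Set (Fin ℓ → ℝ × ℝ)) := by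
      rw [hU]; trivial
    rw [Set.mem_setOf_eq, heval] at h0
    have e1 : p0 i1 = (0, 0) := by simp [hp0, i1]
    have e2 : p0 i2 = (1, 0) := by simp [hp0, i2]
    have e3 : p0 i3 = (0, 1) := by simp [hp0, i3]
    rw [e1, e2, e3] at h0
    norm_num at h0
  · rintro p ⟨q, hq⟩
    rw [Set.mem_setOf_eq, heval]
    obtain ⟨v, hv, hker⟩ := exists_kernel_vec hq
    have hv' : v 0 ≠ 0 ∨ v 1 ≠ 0 := by
      by_contra hvv
      push_neg at hvv
      apply hv
      ext j
      fin_cases j <;> simp [hvv.1, hvv.2]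
    have hrow : ∀ i : Fin ℓ, i.val ≠ 0 →
        (q.1 - (p i).1) * v 0 + (q.2 - (p i).2) * v 1 = 0 := by
      intro i hi
      have := congrFun hker i
      simp [Matrix.mulVec, dotProduct, Fin.sum_univ_two, Jmat, hi] at this
      linarith [this]
    have h12 := minor_zero hv' (hrow i1 (by simp [i1])) (hrow i2 (by simp [i2]))
    have h13 := minor_zero hv' (hrow i1 (by simp [i1])) (hrow i3 (by simp [i3]))
    have h23 := minor_zero hv' (hrow i2 (by simp [i2])) (hrow i3 (by simp [i3]))
    linear_combination h12 - h13 + h23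
end

section
/- Let ℓ ≥ 3, 0 < a < b, and p = (p₁,…,p_ℓ) ∈ (ℝ²)^ℓ. Suppose q ∈ ℝ² is a singular point of F_p with q ≠ p_i for all i. Then the points p₂, p₃, …, p_ℓ all lie on a single line through q, namely the line through q with direction vector (a(q₁-p₁₁), b(q₂-p₁₂)). -/
/-- If two rows of a matrix over a field are linearly independent, the rank is at least 2. -/
lemma two_le_rank_of_rows {ℓ : ℕ} (A : Matrix (Fin ℓ) (Fin 2) ℝ) (i j : Fin ℓ)
    (hij : i ≠ j) (h : LinearIndependent ℝ ![A i, A j]) : 2 ≤ A.rank := by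
  rw [Matrix.rank_eq_finrank_span_row]
  have hle : Submodule.span ℝ (Set.range ![A i, A j]) ≤
      Submodule.span ℝ (Set.range A) := by
    apply Submodule.span_mono
    rintro x ⟨k, rfl⟩
    fin_cases k <;> exact ⟨_, rfl⟩
  have h2 : Module.finrank ℝ (Submodule.span ℝ (Set.range ![A i, A j])) = 2 := by
    simpa using finrank_span_eq_card h
  calc (2 : ℕ) = Module.finrank ℝ (Submodule.span ℝ (Set.range ![A i, A j])) := h2.symm
    _ ≤ Module.finrank ℝ (Submodule.span ℝ (Set.range A)) := Submodule.finrank_mono hle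

/-- if q is a singular point of F_p with q ≠ p_i for all i, then the centers
p₂,…,p_ℓ all lie on the line through q with direction (a(q₁-p₁₁), b(q₂-p₁₂)). -/
theorem stmt9 (ℓ : ℕ) (hℓ : 3 ≤ ℓ) (a b : ℝ) (ha : 0 < a) (hab : a < b)
    (p : Fin ℓ → ℝ × ℝ) (q : ℝ × ℝ)
    (hsing : IsSingular ℓ a b p q) (hq : ∀ i : Fin ℓ, q ≠ p i) :
    ∀ i : Fin ℓ, i.val ≠ 0 → ∃ t : ℝ,
      p i = q + t • ((a * (q.1 - (p ⟨0, by omega⟩).1),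
        b * (q.2 - (p ⟨0, by omega⟩).2)) : ℝ × ℝ) := by
  intro i hi
  set i0 : Fin ℓ := ⟨0, by omega⟩ with hi0
  set A1 : ℝ := a * (q.1 - (p i0).1) with hA1
  set B1 : ℝ := b * (q.2 - (p i0).2) with hB1
  set u : ℝ := q.1 - (p i).1 with hu
  set v : ℝ := q.2 - (p i).2 with hv
  have hb : 0 < b := ha.trans hab
  -- the determinant of the 2×2 minor vanishes
  have hdet : A1 * v - B1 * u = 0 := by
    by_contra hd
    set J := Jmat ℓ a b p q with hJ
    have hrow0 : J i0 = ![A1, B1] := by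
      simp [hJ, Jmat, hi0]
      exact ⟨rfl, rfl⟩
    have hrowi : J i = ![u, v] := by
      simp [hJ, Jmat, hi]
      exact ⟨rfl, rfl⟩
    have hM : LinearIndependent ℝ ![J i0, J i] := by
      rw [hrow0, hrowi]
      rw [LinearIndependent.pair_iff' ?_]
      · intro s hs
        have h1 : s * A1 = u := congrFun hs 0
        have h2 : s * B1 = v := congrFun hs 1
        exact hd (by linear_combination B1 * h1 - A1 * h2)
      · intro h0
        have h1 : A1 = 0 := congrFun h0 0
        have h2 : B1 = 0 := congrFun h0 1
        simp [hd, h1, h2] at hd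
    have hne : i0 ≠ i := fun h => hi (by rw [← h])
    have := two_le_rank_of_rows J i0 i hne hM
    exact absurd hsing (by simp [IsSingular, ← hJ]; omega)
  -- the direction vector is nonzero
  have hq0 := hq i0
  have hAB : A1 ≠ 0 ∨ B1 ≠ 0 := by
    by_contra h
    push_neg at h
    obtain ⟨h1, h2⟩ := h
    apply hq0
    have e1 : q.1 = (p i0).1 := by
      have := mul_eq_zero.mp h1
      rcases this with h | h
      · exact absurd h ha.ne'
      · linarith
    have e2 : q.2 = (p i0).2 := by
      have := mul_eq_zero.mp h2
      rcases this with h | h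
      · exact absurd h hb.ne'
      · linarith
    exact Prod.ext e1 e2
  rcases hAB with hA | hB
  · have h1 : -u / A1 * A1 = -u := div_mul_cancel₀ _ hA
    have h2 : -u / A1 * B1 = -v := by
      field_simp
      linear_combination hdet
    refine ⟨-u / A1, Prod.ext ?_ ?_⟩
    · simp only [Prod.smul_fst, Prod.fst_add, smul_eq_mul, h1]
      linarith [hu]
    · simp only [Prod.smul_snd, Prod.snd_add, smul_eq_mul, h2]
      linarith [hv]
  · have h1 : -v / B1 * B1 = -v := div_mul_cancel₀ _ hB
    have h2 : -v / B1 * A1 = -u := by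
      field_simp
      linear_combination -hdet
    refine ⟨-v / B1, Prod.ext ?_ ?_⟩
    · simp only [Prod.smul_fst, Prod.fst_add, smul_eq_mul, h2]
      linarith [hu]
    · simp only [Prod.smul_snd, Prod.snd_add, smul_eq_mul, h1]
      linarith [hv]
end

section
/- Let ℓ > 3 and 0 < a < b. The set of p = (p₁,…,p_ℓ) ∈ (ℝ²)^ℓ such that p₂, p₃, p₄ are collinear is a proper algebraic subset of (ℝ²)^ℓ, and for any p outside this set, the mapping F_p : ℝ² → ℝ^ℓ has no singular point q with q ∉ {p₁,…,p_ℓ}. -/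
lemma det_zero_of_perp (c d : ℝ) (hcd : c ≠ 0 ∨ d ≠ 0)
    (u v w : ℝ × ℝ) (hu : c * u.1 + d * u.2 = 0) (hv : c * v.1 + d * v.2 = 0)
    (hw : c * w.1 + d * w.2 = 0) :
    (v.1 - u.1) * (w.2 - u.2) - (w.1 - u.1) * (v.2 - u.2) = 0 := by
  rcases hcd with hc | hd
  · have h : c * ((v.1 - u.1) * (w.2 - u.2) - (w.1 - u.1) * (v.2 - u.2)) = 0 := by
      linear_combination (w.2 - u.2) * hv - (v.2 - u.2) * hw + (v.2 - w.2) * hu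
    exact (mul_eq_zero.mp h).resolve_left hc
  · have h : d * ((v.1 - u.1) * (w.2 - u.2) - (w.1 - u.1) * (v.2 - u.2)) = 0 := by
      linear_combination (v.1 - u.1) * hw - (w.1 - u.1) * hv + (w.1 - v.1) * hu
    exact (mul_eq_zero.mp h).resolve_left hd

lemma collinear_triple_iff (A B C : ℝ × ℝ) :
    Collinear ℝ ({A, B, C} : Set (ℝ × ℝ)) ↔
      (B.1 - A.1) * (C.2 - A.2) - (C.1 - A.1) * (B.2 - A.2) = 0 := by
  rw [collinear_iff_of_mem (Set.mem_insert A _)]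
  constructor
  · rintro ⟨v, h⟩
    obtain ⟨rB, hB⟩ := h B (by simp)
    obtain ⟨rC, hC⟩ := h C (by simp)
    rw [Prod.ext_iff] at hB hC
    simp only [Prod.smul_def, vadd_eq_add, Prod.fst_add, Prod.snd_add, smul_eq_mul] at hB hC
    obtain ⟨hB1, hB2⟩ := hB
    obtain ⟨hC1, hC2⟩ := hC
    rw [hB1, hB2, hC1, hC2]; ring
  · intro hdet
    by_cases hBA : B = A
    · refine ⟨(C.1 - A.1, C.2 - A.2), ?_⟩
      intro x hx
      simp only [Set.mem_insert_iff, Set.mem_singleton_iff] at hx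
      rcases hx with h | h | h
      · exact ⟨0, by simp [h]⟩
      · exact ⟨0, by simp [h, hBA]⟩
      · exact ⟨1, by rw [h]; exact Prod.ext (by simp) (by simp)⟩
    · refine ⟨(B.1 - A.1, B.2 - A.2), ?_⟩
      have hne : (B.1 - A.1) ^ 2 + (B.2 - A.2) ^ 2 ≠ 0 := by
        intro h
        apply hBA
        have h1 : B.1 - A.1 = 0 := by nlinarith [sq_nonneg (B.1 - A.1), sq_nonneg (B.2 - A.2)]
        have h2 : B.2 - A.2 = 0 := by nlinarith [sq_nonneg (B.1 - A.1), sq_nonneg (B.2 - A.2)]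
        exact Prod.ext (by linarith) (by linarith)
      intro x hx
      simp only [Set.mem_insert_iff, Set.mem_singleton_iff] at hx
      rcases hx with h | h | h
      · exact ⟨0, by simp [h]⟩
      · exact ⟨1, by rw [h]; exact Prod.ext (by simp) (by simp)⟩
      · rw [h]
        refine ⟨((C.1 - A.1) * (B.1 - A.1) + (C.2 - A.2) * (B.2 - A.2)) /
          ((B.1 - A.1) ^ 2 + (B.2 - A.2) ^ 2), ?_⟩
        have e1 : ((C.1 - A.1) * (B.1 - A.1) + (C.2 - A.2) * (B.2 - A.2)) /
            ((B.1 - A.1) ^ 2 + (B.2 - A.2) ^ 2) * (B.1 - A.1) + A.1 = C.1 := by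
          field_simp
          linear_combination (B.2 - A.2) * hdet
        have e2 : ((C.1 - A.1) * (B.1 - A.1) + (C.2 - A.2) * (B.2 - A.2)) /
            ((B.1 - A.1) ^ 2 + (B.2 - A.2) ^ 2) * (B.2 - A.2) + A.2 = C.2 := by
          field_simp
          linear_combination (-(B.1 - A.1)) * hdet
        exact Prod.ext (by simpa using e1.symm) (by simpa using e2.symm)



/-- for ℓ > 3, the set of p with p₂, p₃, p₄ collinear is a proper algebraic
subset, and for p outside it F_p has no singular point away from the centers p₁,…,p_ℓ. -/
theorem stmt10 (ℓ : ℕ) (hℓ : 3 < ℓ) (a b : ℝ) (ha : 0 < a) (hab : a < b)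
    (Sig : Set (Fin ℓ → ℝ × ℝ))
    (hSig : Sig = {p | Collinear ℝ
      ({p ⟨1, by omega⟩, p ⟨2, by omega⟩, p ⟨3, by omega⟩} : Set (ℝ × ℝ))}) :
    (∃ S : Finset (MvPolynomial (Fin ℓ × Fin 2) ℝ),
      Sig = {p | ∀ f ∈ S, MvPolynomial.eval (coords ℓ p) f = 0}) ∧
    Sig ≠ Set.univ ∧
    ∀ p ∉ Sig, ∀ q : ℝ × ℝ, IsSingular ℓ a b p q → ∃ i : Fin ℓ, q = p i := by
    classical
  have h1 : (1 : ℕ) < ℓ := by omega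
  have h2 : (2 : ℕ) < ℓ := by omega
  have h3 : (3 : ℕ) < ℓ := by omega
  set i1 : Fin ℓ := ⟨1, h1⟩
  set i2 : Fin ℓ := ⟨2, h2⟩
  set i3 : Fin ℓ := ⟨3, h3⟩
  refine ⟨?_, ?_, ?_⟩
  · -- algebraic set
    refine ⟨{(MvPolynomial.X (i2, 0) - MvPolynomial.X (i1, 0)) *
        (MvPolynomial.X (i3, 1) - MvPolynomial.X (i1, 1)) -
        (MvPolynomial.X (i3, 0) - MvPolynomial.X (i1, 0)) *
        (MvPolynomial.X (i2, 1) - MvPolynomial.X (i1, 1))}, ?_⟩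
    rw [hSig]
    ext p
    simp only [Set.mem_setOf_eq, Finset.mem_singleton, forall_eq, map_sub, map_mul,
      MvPolynomial.eval_X]
    rw [collinear_triple_iff]
    simp [coords]
  · -- not everything
    rw [hSig]
    intro h
    set p0 : Fin ℓ → ℝ × ℝ := fun i =>
      if i.val = 2 then (1, 0) else if i.val = 3 then (0, 1) else (0, 0) with hp0
    have hmem : p0 ∈ (Set.univ : Set (Fin ℓ → ℝ × ℝ)) := Set.mem_univ _
    rw [← h, Set.mem_setOf_eq, collinear_triple_iff] at hmem
    norm_num [hp0] at hmem
  · -- no singular points away from centers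
    intro p hp q hq
    exfalso
    apply hp
    rw [hSig, Set.mem_setOf_eq, collinear_triple_iff]
    -- from rank < 2, the two columns are dependent
    have hdep : ¬ LinearIndependent ℝ (Matrix.transpose (Jmat ℓ a b p q)) := by
      intro hli
      have hr : (Jmat ℓ a b p q).rank = 2 := by
        rw [Matrix.rank_eq_finrank_span_cols, finrank_span_eq_card (b := (Jmat ℓ a b p q).col) hli, Fintype.card_fin]
      have := hq
      rw [IsSingular, hr] at this
      omega
    obtain ⟨c, d, hcd, hlin⟩ : ∃ c d : ℝ, (c ≠ 0 ∨ d ≠ 0) ∧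
        ∀ i, c * Jmat ℓ a b p q i 0 + d * Jmat ℓ a b p q i 1 = 0 := by
      replace hdep := (not_congr (linearIndependent_fin2 (K := ℝ) (f := fun (j : Fin 2) (i : Fin ℓ) => Matrix.transpose (Jmat ℓ a b p q) j i))).mp hdep; rw [not_and_or] at hdep
      rcases hdep with h' | h'
      · push_neg at h'
        refine ⟨0, 1, Or.inr one_ne_zero, fun i => ?_⟩
        have := congrFun h' i
        simp only [Matrix.transpose_apply, Pi.zero_apply] at this
        simp [this]
      · push_neg at h'
        obtain ⟨t, ht⟩ := h'
        refine ⟨1, -t, Or.inl one_ne_zero, fun i => ?_⟩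
        have := congrFun ht i
        simp only [Matrix.transpose_apply, Pi.smul_apply, smul_eq_mul] at this
        linarith [this]
    have key : ∀ i : Fin ℓ, i.val ≠ 0 →
        c * (q.1 - (p i).1) + d * (q.2 - (p i).2) = 0 := by
      intro i hi
      have := hlin i
      simp only [Jmat, hi, if_false, Matrix.cons_val_zero, Matrix.cons_val_one,
        Matrix.head_cons] at this
      exact this
    have hdet := det_zero_of_perp c d hcd
      (q.1 - (p i1).1, q.2 - (p i1).2) (q.1 - (p i2).1, q.2 - (p i2).2)
      (q.1 - (p i3).1, q.2 - (p i3).2)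
      (key i1 (by simp [i1])) (key i2 (by simp [i2])) (key i3 (by simp [i3]))
    simp only at hdet
    linear_combination hdet
end
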